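/- Let N be an even positive integer and let k be an odd positive integer. Then the sum of 2^(p_m + t_m), taken over all divisors m of N such that 2*m^2 divides N*k, equals σ(N/2), the number of positive divisors of N/2. -/

import Mathlib

open Finset Nat

/-- `p_m`: the number of odd primes dividing `N*m'/m^2` but not `k/m'`, where `m' = gcd(m,k)`. -/
def pm (N k m : ℕ) : ℕ :=
  ((N * Nat.gcd m k / m ^ 2).primeFactors.filter
    (fun p => p ≠ 2 ∧ ¬ p ∣ k / Nat.gcd m k)).card

/-- `t_m`: equal to `0` if `N*m'/m^2` is odd, or `4 ∣ k/m'`, or both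
`N*m'/m^2 ≡ 2 (mod 4)` and `k/m'` is odd; and equal to `1` otherwise. -/
def tm (N k m : ℕ) : ℕ :=
  if Odd (N * Nat.gcd m k / m ^ 2) ∨ 4 ∣ k / Nat.gcd m k ∨
      ((N * Nat.gcd m k / m ^ 2) % 4 = 2 ∧ Odd (k / Nat.gcd m k)) then 0 else 1

lemma sum_div_mul (f : ℕ → ℕ) {a b : ℕ} (ha : a ≠ 0) (hb : b ≠ 0) (h : Nat.Coprime a b) :
    ∑ m ∈ (a * b).divisors, f m = ∑ d ∈ a.divisors, ∑ e ∈ b.divisors, f (d * e) := by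
  rw [← Finset.sum_product']
  refine Finset.sum_nbij' (fun m => (Nat.gcd m a, Nat.gcd m b)) (fun p => p.1 * p.2) ?_ ?_ ?_ ?_ ?_
  · intro m hm
    simp only [Nat.mem_divisors] at hm
    simp [Finset.mem_product, Nat.mem_divisors, Nat.gcd_dvd_right, ha, hb]
  · intro p hp
    simp only [Finset.mem_product, Nat.mem_divisors] at hp
    simp [Nat.mem_divisors, mul_ne_zero ha hb, mul_dvd_mul hp.1.1 hp.2.1]
  · intro m hm
    simp only [Nat.mem_divisors] at hm
    exact (Nat.gcd_mul_gcd_eq_iff_dvd_mul_of_coprime h).2 hm.1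
  · intro p hp
    simp only [Finset.mem_product, Nat.mem_divisors] at hp
    obtain ⟨⟨hd, _⟩, ⟨he, _⟩⟩ := hp
    have h1 : Nat.Coprime p.2 a := Nat.Coprime.coprime_dvd_left he h.symm
    have h2 : Nat.Coprime p.1 b := Nat.Coprime.coprime_dvd_left hd h
    have g1 : Nat.gcd (p.1 * p.2) a = p.1 := by
      rw [mul_comm, h1.gcd_mul_left_cancel, Nat.gcd_eq_left hd]
    have g2 : Nat.gcd (p.1 * p.2) b = p.2 := by
      rw [h2.gcd_mul_left_cancel, Nat.gcd_eq_left he]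
    simp [g1, g2]
  · intro m hm
    simp only [Nat.mem_divisors] at hm
    rw [(Nat.gcd_mul_gcd_eq_iff_dvd_mul_of_coprime h).2 hm.1]

lemma key_div {N k m : ℕ} (hmN : m ∣ N) (h2 : m ^ 2 ∣ N * k) : m ^ 2 ∣ N * Nat.gcd m k := by
  rw [← Nat.gcd_mul_left]
  exact Nat.dvd_gcd (by rw [pow_two]; exact mul_dvd_mul hmN dvd_rfl) h2

lemma pm_eq {N k m : ℕ} (hN : N ≠ 0) (hk : k ≠ 0) (hmN : m ∣ N) (h2 : m ^ 2 ∣ N * k) :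
    pm N k m = (N.primeFactors.filter (fun q => q ≠ 2 ∧ k.factorization q ≤ m.factorization q ∧
      2 * m.factorization q < N.factorization q + k.factorization q)).card := by
  have hm0 : m ≠ 0 := by rintro rfl; simp at hmN; exact hN hmN
  set g := Nat.gcd m k with hg
  have hgk : g ∣ k := Nat.gcd_dvd_right m k
  have hg0 : g ≠ 0 := fun h => hk (by simpa [h] using hgk)
  have key : m ^ 2 ∣ N * g := key_div hmN h2
  have hx0 : N * g / m ^ 2 ≠ 0 := by
    have := Nat.div_pos (Nat.le_of_dvd (by positivity) key) (by positivity)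
    omega
  unfold pm
  congr 1
  ext q
  by_cases hq : q.Prime
  swap
  · simp [hq, Nat.mem_primeFactors]
  have hxq : (N * g / m ^ 2).factorization q
      = N.factorization q + min (m.factorization q) (k.factorization q) - 2 * m.factorization q := by
    rw [Nat.factorization_div key, Nat.factorization_mul hN hg0, Nat.factorization_gcd hm0 hk,
      Nat.factorization_pow]
    simp [Finsupp.tsub_apply, Finsupp.inf_apply]
  have hkg : (k / g).factorization q = k.factorization q - min (m.factorization q) (k.factorization q) := by
    rw [Nat.factorization_div hgk, hg, Nat.factorization_gcd hm0 hk]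
    simp [Finsupp.tsub_apply, Finsupp.inf_apply]
  have hmle : m.factorization q ≤ N.factorization q :=
    (Nat.factorization_le_iff_dvd hm0 hN).2 hmN q
  have hdx : q ∣ N * g / m ^ 2 ↔ 1 ≤ (N * g / m ^ 2).factorization q :=
    hq.dvd_iff_one_le_factorization hx0
  have hdN : q ∣ N ↔ 1 ≤ N.factorization q := hq.dvd_iff_one_le_factorization hN
  have hkg0 : k / g ≠ 0 := (Nat.div_pos (Nat.le_of_dvd hk.bot_lt hgk) hg0.bot_lt).ne'
  have hdkg : q ∣ k / g ↔ 1 ≤ (k / g).factorization q := hq.dvd_iff_one_le_factorization hkg0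
  simp only [Finset.mem_filter, Nat.mem_primeFactors, hq, true_and, hx0, hN, ne_eq,
    not_false_iff, and_true]
  rw [hdx, hdkg, hdN, hxq, hkg]
  constructor
  · rintro ⟨h1, h2', h3⟩
    refine ⟨?_, h2', ?_, ?_⟩ <;> omega
  · rintro ⟨h1, h2', h3, h4⟩
    refine ⟨⟨?_, hx0⟩, h2', ?_⟩ <;> omega

lemma sum_w_odd (α κ : ℕ) :
    ∑ e ∈ Finset.range (α + 1),
      (if 2 * e ≤ α + κ then 2 ^ (if κ ≤ e ∧ 2 * e < α + κ then 1 else 0) else 0) = α + 1 := by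
  have h : ∀ e, (if 2 * e ≤ α + κ then 2 ^ (if κ ≤ e ∧ 2 * e < α + κ then 1 else 0) else 0)
      = (if 2 * e ≤ α + κ then 1 else 0) + (if κ ≤ e ∧ 2 * e < α + κ then 1 else 0) := by
    intro e; split_ifs <;> omega
  simp only [h, Finset.sum_add_distrib, Finset.sum_ite_eq, ← Finset.sum_filter]
  rw [Finset.sum_filter, ← Finset.card_filter, Finset.sum_filter, ← Finset.card_filter]
  have h1 : (Finset.range (α + 1)).filter (fun e => 2 * e ≤ α + κ)
      = Finset.range (min (α + 1) ((α + κ) / 2 + 1)) := by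
    ext e; simp only [Finset.mem_filter, Finset.mem_range, lt_min_iff]; omega
  have h2 : (Finset.range (α + 1)).filter (fun e => κ ≤ e ∧ 2 * e < α + κ)
      = Finset.Ico κ (min (α + 1) ((α + κ + 1) / 2)) := by
    ext e; simp only [Finset.mem_filter, Finset.mem_range, Finset.mem_Ico, lt_min_iff]; omega
  rw [h1, h2, Finset.card_range, Nat.card_Ico]
  omega

lemma sum_w_two (a : ℕ) :
    ∑ e ∈ Finset.range (a + 1),
      (if 2 * e + 1 ≤ a then 2 ^ (if 2 * e + 2 ≤ a then 1 else 0) else 0) = a := by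
  have h : ∀ e, (if 2 * e + 1 ≤ a then 2 ^ (if 2 * e + 2 ≤ a then 1 else 0) else 0)
      = (if 2 * e + 1 ≤ a then 1 else 0) + (if 2 * e + 2 ≤ a then 1 else 0) := by
    intro e; split_ifs <;> omega
  simp only [h, Finset.sum_add_distrib]
  rw [← Finset.card_filter, ← Finset.card_filter]
  have h1 : (Finset.range (a + 1)).filter (fun e => 2 * e + 1 ≤ a)
      = Finset.range ((a + 1) / 2) := by
    ext e; simp only [Finset.mem_filter, Finset.mem_range]; omega
  have h2 : (Finset.range (a + 1)).filter (fun e => 2 * e + 2 ≤ a)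
      = Finset.range (a / 2) := by
    ext e; simp only [Finset.mem_filter, Finset.mem_range]; omega
  rw [h1, h2, Finset.card_range, Finset.card_range]
  omega

lemma G_split {p t k α e m₂ : ℕ} (hp : p.Prime) (hp2 : p ≠ 2) (hpt : ¬ p ∣ t)
    (ht : t ≠ 0) (hk : k ≠ 0) (hα : 1 ≤ α) (he : e ≤ α) (hm₂ : m₂ ∣ t) :
    (if (p ^ e * m₂) ^ 2 ∣ (p ^ α * t) * k then 2 ^ pm (p ^ α * t) k (p ^ e * m₂) else 0)
    = (if 2 * e ≤ α + k.factorization p then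
        2 ^ (if k.factorization p ≤ e ∧ 2 * e < α + k.factorization p then 1 else 0) else 0)
      * (if m₂ ^ 2 ∣ t * k then 2 ^ pm t k m₂ else 0) := by
  set κ := k.factorization p with hκ
  have hm₂0 : m₂ ≠ 0 := fun h => ht (by simpa [h] using hm₂)
  have hpα : p ^ α ≠ 0 := pow_ne_zero _ hp.ne_zero
  have hpe : p ^ e ≠ 0 := pow_ne_zero _ hp.ne_zero
  have hn0 : p ^ α * t ≠ 0 := mul_ne_zero hpα ht
  have hm0 : p ^ e * m₂ ≠ 0 := mul_ne_zero hpe hm₂0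
  have hpm₂ : ¬ p ∣ m₂ := fun h => hpt (h.trans hm₂)
  have hm₂p : m₂.factorization p = 0 := Nat.factorization_eq_zero_of_not_dvd hpm₂
  have htp : t.factorization p = 0 := Nat.factorization_eq_zero_of_not_dvd hpt
  have hfm : ∀ q, (p ^ e * m₂).factorization q = (if p = q then e else 0) + m₂.factorization q := by
    intro q
    rw [Nat.factorization_mul hpe hm₂0, hp.factorization_pow]
    simp [Finsupp.single_apply]
  have hfn : ∀ q, (p ^ α * t).factorization q = (if p = q then α else 0) + t.factorization q := by
    intro q
    rw [Nat.factorization_mul hpα ht, hp.factorization_pow]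
    simp [Finsupp.single_apply]
  have hcond : (p ^ e * m₂) ^ 2 ∣ (p ^ α * t) * k ↔ (2 * e ≤ α + κ ∧ m₂ ^ 2 ∣ t * k) := by
    rw [← Nat.factorization_le_iff_dvd (pow_ne_zero _ hm0) (mul_ne_zero hn0 hk),
      ← Nat.factorization_le_iff_dvd (pow_ne_zero _ hm₂0) (mul_ne_zero ht hk),
      Finsupp.le_def, Finsupp.le_def]
    have hpt2 : ∀ q, ((p ^ e * m₂) ^ 2).factorization q = 2 * ((if p = q then e else 0) + m₂.factorization q) := by
      intro q; rw [Nat.factorization_pow, Finsupp.smul_apply, hfm]; simp [mul_comm]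
    have hm₂2 : ∀ q, (m₂ ^ 2).factorization q = 2 * m₂.factorization q := by
      intro q; rw [Nat.factorization_pow, Finsupp.smul_apply]; simp [mul_comm]
    have hnk : ∀ q, ((p ^ α * t) * k).factorization q
        = (if p = q then α else 0) + t.factorization q + k.factorization q := by
      intro q; rw [Nat.factorization_mul hn0 hk, Finsupp.add_apply, hfn]
    have htk : ∀ q, (t * k).factorization q = t.factorization q + k.factorization q := by
      intro q; rw [Nat.factorization_mul ht hk, Finsupp.add_apply]
    constructor
    · intro h
      constructor
      · have := h p; rw [hpt2, hnk] at this; simp [hm₂p, htp, ← hκ] at this; omega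
      · intro q
        have := h q; rw [hpt2, hnk] at this; rw [hm₂2, htk]
        by_cases hq : p = q
        · subst hq; simp [hm₂p, htp]
        · simp [hq] at this ⊢; omega
    · rintro ⟨h1, h2⟩ q
      have := h2 q; rw [hm₂2, htk] at this; rw [hpt2, hnk]
      by_cases hq : p = q
      · subst hq; simp [hm₂p, htp, ← hκ]; omega
      · simp [hq]; omega
  by_cases hc2 : m₂ ^ 2 ∣ t * k
  swap
  · have hno : ¬ (p ^ e * m₂) ^ 2 ∣ (p ^ α * t) * k := fun h => hc2 ((hcond.1 h).2)
    simp [hc2, hno]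
  by_cases hc1 : 2 * e ≤ α + κ
  swap
  · have hno : ¬ (p ^ e * m₂) ^ 2 ∣ (p ^ α * t) * k := fun h => hc1 ((hcond.1 h).1)
    simp [hc1, hno]
  have hcm : (p ^ e * m₂) ^ 2 ∣ (p ^ α * t) * k := hcond.2 ⟨hc1, hc2⟩
  rw [if_pos hcm, if_pos hc1, if_pos hc2, ← pow_add]
  congr 1
  have hmdvd : p ^ e * m₂ ∣ p ^ α * t := mul_dvd_mul (pow_dvd_pow p he) hm₂
  rw [pm_eq hn0 hk hmdvd hcm, pm_eq ht hk hm₂ hc2]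
  have hpf : (p ^ α * t).primeFactors = insert p t.primeFactors := by
    rw [Nat.primeFactors_mul hpα ht, Nat.primeFactors_pow p (by omega), hp.primeFactors]
    rfl
  rw [hpf, Finset.filter_insert]
  have hnotmem : p ∉ t.primeFactors := fun h => hpt (Nat.dvd_of_mem_primeFactors h)
  have hfilt : t.primeFactors.filter (fun q => q ≠ 2 ∧ k.factorization q ≤ (p ^ e * m₂).factorization q ∧
      2 * (p ^ e * m₂).factorization q < (p ^ α * t).factorization q + k.factorization q)
      = t.primeFactors.filter (fun q => q ≠ 2 ∧ k.factorization q ≤ m₂.factorization q ∧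
      2 * m₂.factorization q < t.factorization q + k.factorization q) := by
    apply Finset.filter_congr
    intro q hq
    have hqp : p ≠ q := fun h => hnotmem (h ▸ hq)
    simp [hfm, hfn, hqp]
  rw [hfilt]
  have hPp : ((p:ℕ) ≠ 2 ∧ k.factorization p ≤ (p ^ e * m₂).factorization p ∧
      2 * (p ^ e * m₂).factorization p < (p ^ α * t).factorization p + k.factorization p)
      ↔ (κ ≤ e ∧ 2 * e < α + κ) := by
    rw [hfm, hfn]
    simp [hm₂p, htp, hp2, ← hκ]
  by_cases hloc : κ ≤ e ∧ 2 * e < α + κ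
  · rw [if_pos (hPp.2 hloc), if_pos hloc,
      Finset.card_insert_of_notMem (fun h => hnotmem (Finset.mem_of_mem_filter _ h))]
    omega
  · rw [if_neg (fun h => hloc (hPp.1 h)), if_neg hloc]
    omega

lemma not_two_dvd_of_odd {n : ℕ} (h : Odd n) : ¬ (2:ℕ) ∣ n := by
  rw [Nat.odd_iff] at h; omega

lemma odd_of_dvd {d k : ℕ} (h : d ∣ k) (hk : Odd k) : Odd d := by
  rcases Nat.even_or_odd d with he | ho
  · exact absurd (he.two_dvd.trans h) (not_two_dvd_of_odd hk)
  · exact ho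

lemma F_split {n k a e m₁ : ℕ} (hn : Odd n) (hn0 : n ≠ 0) (hk : Odd k) (hk0 : k ≠ 0)
    (ha : 1 ≤ a) (he : e ≤ a) (hm₁ : m₁ ∣ n) :
    (if 2 * (2 ^ e * m₁) ^ 2 ∣ (2 ^ a * n) * k then
        2 ^ (pm (2 ^ a * n) k (2 ^ e * m₁) + tm (2 ^ a * n) k (2 ^ e * m₁)) else 0)
    = (if 2 * e + 1 ≤ a then 2 ^ (if 2 * e + 2 ≤ a then 1 else 0) else 0)
      * (if m₁ ^ 2 ∣ n * k then 2 ^ pm n k m₁ else 0) := by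
  have hm₁0 : m₁ ≠ 0 := fun h => hn0 (by simpa [h] using hm₁)
  have h2e : (2:ℕ) ^ e ≠ 0 := pow_ne_zero _ two_ne_zero
  have h2a : (2:ℕ) ^ a ≠ 0 := pow_ne_zero _ two_ne_zero
  have hN0 : (2:ℕ) ^ a * n ≠ 0 := mul_ne_zero h2a hn0
  have hm0 : (2:ℕ) ^ e * m₁ ≠ 0 := mul_ne_zero h2e hm₁0
  have hn2 : n.factorization 2 = 0 :=
    Nat.factorization_eq_zero_of_not_dvd (not_two_dvd_of_odd hn)
  have hk2 : k.factorization 2 = 0 :=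
    Nat.factorization_eq_zero_of_not_dvd (not_two_dvd_of_odd hk)
  have hm₁2 : m₁.factorization 2 = 0 :=
    Nat.factorization_eq_zero_of_not_dvd (not_two_dvd_of_odd (odd_of_dvd hm₁ hn))
  have hfm : ∀ q, ((2:ℕ) ^ e * m₁).factorization q = (if 2 = q then e else 0) + m₁.factorization q := by
    intro q
    rw [Nat.factorization_mul h2e hm₁0, Nat.Prime.factorization_pow Nat.prime_two]
    simp [Finsupp.single_apply]
  have hfN : ∀ q, ((2:ℕ) ^ a * n).factorization q = (if 2 = q then a else 0) + n.factorization q := by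
    intro q
    rw [Nat.factorization_mul h2a hn0, Nat.Prime.factorization_pow Nat.prime_two]
    simp [Finsupp.single_apply]
  have hcond : 2 * (2 ^ e * m₁) ^ 2 ∣ (2 ^ a * n) * k ↔ (2 * e + 1 ≤ a ∧ m₁ ^ 2 ∣ n * k) := by
    have h20 : (2:ℕ) * (2 ^ e * m₁) ^ 2 ≠ 0 := by positivity
    rw [← Nat.factorization_le_iff_dvd h20 (mul_ne_zero hN0 hk0),
      ← Nat.factorization_le_iff_dvd (pow_ne_zero _ hm₁0) (mul_ne_zero hn0 hk0),
      Finsupp.le_def, Finsupp.le_def]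
    have hl : ∀ q, ((2:ℕ) * (2 ^ e * m₁) ^ 2).factorization q
        = (if 2 = q then 1 else 0) + 2 * ((if 2 = q then e else 0) + m₁.factorization q) := by
      intro q
      rw [Nat.factorization_mul two_ne_zero (pow_ne_zero _ hm0), Finsupp.add_apply,
        Nat.factorization_pow, Finsupp.smul_apply, hfm, Nat.Prime.factorization Nat.prime_two]
      simp [Finsupp.single_apply, mul_comm, mul_add]
    have hr : ∀ q, (((2:ℕ) ^ a * n) * k).factorization q
        = (if 2 = q then a else 0) + n.factorization q + k.factorization q := by
      intro q
      rw [Nat.factorization_mul hN0 hk0, Finsupp.add_apply, hfN]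
    have hm₁sq : ∀ q, ((m₁:ℕ) ^ 2).factorization q = 2 * m₁.factorization q := by
      intro q; rw [Nat.factorization_pow, Finsupp.smul_apply]; simp [mul_comm]
    have hnk : ∀ q, ((n:ℕ) * k).factorization q = n.factorization q + k.factorization q := by
      intro q; rw [Nat.factorization_mul hn0 hk0, Finsupp.add_apply]
    constructor
    · intro h
      constructor
      · have := h 2; rw [hl, hr] at this; simp [hn2, hk2, hm₁2] at this; omega
      · intro q
        have := h q; rw [hl, hr] at this; rw [hm₁sq, hnk]
        by_cases hq : (2:ℕ) = q
        · subst hq; simp [hm₁2, hn2, hk2]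
        · simp [hq] at this ⊢; omega
    · rintro ⟨h1, h2⟩ q
      have := h2 q; rw [hm₁sq, hnk] at this; rw [hl, hr]
      by_cases hq : (2:ℕ) = q
      · subst hq; simp [hm₁2, hn2, hk2]; omega
      · simp [hq]; omega
  by_cases hc2 : m₁ ^ 2 ∣ n * k
  swap
  · have hno : ¬ 2 * (2 ^ e * m₁) ^ 2 ∣ (2 ^ a * n) * k := fun h => hc2 ((hcond.1 h).2)
    simp [hc2, hno]
  by_cases hc1 : 2 * e + 1 ≤ a
  swap
  · have hno : ¬ 2 * (2 ^ e * m₁) ^ 2 ∣ (2 ^ a * n) * k := fun h => hc1 ((hcond.1 h).1)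
    simp [hc1, hno]
  have hcm : 2 * (2 ^ e * m₁) ^ 2 ∣ (2 ^ a * n) * k := hcond.2 ⟨hc1, hc2⟩
  rw [if_pos hcm, if_pos hc1, if_pos hc2]
  have hmdvd : (2:ℕ) ^ e * m₁ ∣ 2 ^ a * n := mul_dvd_mul (pow_dvd_pow 2 he) hm₁
  have hmsq : ((2:ℕ) ^ e * m₁) ^ 2 ∣ (2 ^ a * n) * k := dvd_trans (dvd_mul_left _ 2) hcm
  have hpmeq : pm (2 ^ a * n) k (2 ^ e * m₁) = pm n k m₁ := by
    rw [pm_eq hN0 hk0 hmdvd hmsq, pm_eq hn0 hk0 hm₁ hc2]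
    have hpf : ((2:ℕ) ^ a * n).primeFactors = insert 2 n.primeFactors := by
      rw [Nat.primeFactors_mul h2a hn0, Nat.primeFactors_pow 2 (by omega),
        Nat.Prime.primeFactors Nat.prime_two]
      rfl
    rw [hpf, Finset.filter_insert, if_neg (by simp)]
    congr 1
    apply Finset.filter_congr
    intro q hq
    have hq2 : (2:ℕ) ≠ q := by
      intro h
      exact not_two_dvd_of_odd hn (h ▸ Nat.dvd_of_mem_primeFactors hq)
    simp [hfm, hfN, hq2]
  have htmeq : tm (2 ^ a * n) k (2 ^ e * m₁) = if 2 * e + 2 ≤ a then 1 else 0 := by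
    set m := (2:ℕ) ^ e * m₁ with hmdef
    set N := (2:ℕ) ^ a * n with hNdef
    set g := Nat.gcd m k with hgdef
    have hgk : g ∣ k := Nat.gcd_dvd_right m k
    have hg0 : g ≠ 0 := fun h => hk0 (by simpa [h] using hgk)
    have hkgodd : Odd (k / g) := odd_of_dvd (Nat.div_dvd_of_dvd hgk) hk
    have h4kg : ¬ (4:ℕ) ∣ k / g := fun h =>
      not_two_dvd_of_odd hkgodd ((by norm_num : (2:ℕ) ∣ 4).trans h)
    have key : m ^ 2 ∣ N * g := key_div hmdvd hmsq
    set x := N * g / m ^ 2 with hxdef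
    have hx0 : x ≠ 0 := by
      have := Nat.div_pos (Nat.le_of_dvd (by positivity) key) (by positivity)
      omega
    have hgf2 : g.factorization 2 = 0 := by
      rw [hgdef, Nat.factorization_gcd hm0 hk0]
      simp [Finsupp.inf_apply, hk2]
    have hs : x.factorization 2 = a - 2 * e := by
      rw [hxdef, Nat.factorization_div key]
      rw [Finsupp.tsub_apply, Nat.factorization_mul hN0 hg0, Finsupp.add_apply,
        Nat.factorization_pow, Finsupp.smul_apply, hfN 2, hfm 2, hgf2]
      simp [hn2, hm₁2, mul_comm]
    set s := x.factorization 2 with hsdef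
    have hs1 : 1 ≤ s := by omega
    set y := ordCompl[2] x with hydef
    have hxy : x = 2 ^ s * y := (Nat.ordProj_mul_ordCompl_eq_self x 2).symm
    have hy2 : ¬ (2:ℕ) ∣ y := Nat.not_dvd_ordCompl Nat.prime_two hx0
    have hyodd : Odd y := Nat.odd_iff.2 (by
      rcases Nat.mod_two_eq_zero_or_one y with h | h
      · exact absurd (Nat.dvd_iff_mod_eq_zero.2 h) hy2
      · exact h)
    have h2x : (2:ℕ) ∣ x := by
      rw [hxy]
      exact Dvd.dvd.mul_right (dvd_pow_self 2 (by omega)) y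
    unfold tm
    rw [← hgdef, ← hxdef]
    by_cases hc : 2 * e + 2 ≤ a
    · rw [if_pos hc, if_neg]
      rintro (h | h | h)
      · rw [Nat.odd_iff] at h; omega
      · exact h4kg h
      · have h4x : (4:ℕ) ∣ x := by
          rw [hxy]
          have h42 : (4:ℕ) ∣ 2 ^ s := by
            have h22 : (2:ℕ) ^ 2 ∣ 2 ^ s := pow_dvd_pow 2 (by omega)
            norm_num at h22
            exact h22
          exact h42.mul_right y
        omega
    · rw [if_neg hc, if_pos]
      right; right
      refine ⟨?_, hkgodd⟩
      have hseq : s = 1 := by omega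
      obtain ⟨j, hj⟩ := hyodd
      rw [hxy, hseq, hj]
      ring_nf
      omega
  rw [hpmeq, htmeq]
  rw [pow_add]
  ring

lemma odd_sum : ∀ n : ℕ, Odd n → n ≠ 0 → ∀ k : ℕ, k ≠ 0 →
    ∑ m ∈ n.divisors, (if m ^ 2 ∣ n * k then 2 ^ pm n k m else 0) = n.divisors.card := by
  intro n
  induction n using Nat.strong_induction_on with
  | _ n ih =>
  intro hodd hn0 k hk
  rcases eq_or_ne n 1 with rfl | hn1
  · simp [pm]
  set p := n.minFac with hpdef
  have hp : p.Prime := Nat.minFac_prime hn1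
  have hpn : p ∣ n := Nat.minFac_dvd n
  have hp2 : p ≠ 2 := by
    intro h
    rw [Nat.odd_iff] at hodd
    have := (h ▸ hpn)
    omega
  set α := n.factorization p with hαdef
  have hα : 1 ≤ α := (Nat.Prime.factorization_pos_of_dvd hp hn0 hpn)
  set t := ordCompl[p] n with htdef
  have hnt : n = p ^ α * t := (Nat.ordProj_mul_ordCompl_eq_self n p).symm
  have hpt : ¬ p ∣ t := Nat.not_dvd_ordCompl hp hn0
  have ht0 : t ≠ 0 := (Nat.ordCompl_pos p hn0).ne'
  have htdvd : t ∣ n := Nat.ordCompl_dvd n p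
  have htlt : t < n := by
    rw [hnt]
    exact (Nat.lt_mul_iff_one_lt_left (Nat.pos_of_ne_zero ht0)).2
      (Nat.one_lt_pow (by omega) hp.one_lt)
  have htodd : Odd t := by
    rcases Nat.even_or_odd t with he | ho
    · exfalso
      rw [Nat.odd_iff] at hodd
      have h2 : 2 ∣ t := he.two_dvd
      have := h2.trans htdvd
      omega
    · exact ho
  have hcop : Nat.Coprime (p ^ α) t := Nat.Coprime.pow_left α (hp.coprime_iff_not_dvd.2 hpt)
  rw [hnt, sum_div_mul _ (pow_ne_zero α hp.ne_zero) ht0 hcop,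
    Nat.sum_divisors_prime_pow hp]
  have hstep : ∀ e ∈ Finset.range (α + 1), ∀ m₂ ∈ t.divisors,
      (if (p ^ e * m₂) ^ 2 ∣ (p ^ α * t) * k then 2 ^ pm (p ^ α * t) k (p ^ e * m₂) else 0)
      = (if 2 * e ≤ α + k.factorization p then
          2 ^ (if k.factorization p ≤ e ∧ 2 * e < α + k.factorization p then 1 else 0) else 0)
        * (if m₂ ^ 2 ∣ t * k then 2 ^ pm t k m₂ else 0) := by
    intro e he m₂ hm₂
    exact G_split hp hp2 hpt ht0 hk hα (by simp at he; omega) (Nat.dvd_of_mem_divisors hm₂)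
  rw [Finset.sum_congr rfl (fun e he => Finset.sum_congr rfl (fun m₂ hm₂ => hstep e he m₂ hm₂))]
  rw [← Finset.sum_mul_sum]
  rw [sum_w_odd, ih t htlt htodd ht0 k hk, hcop.card_divisors_mul]
  congr 1
  rw [Nat.divisors_prime_pow hp]
  simp


theorem sum_over_divisors_even_odd_case (N k : ℕ) (hN : 0 < N) (hNeven : Even N)
    (hk : 0 < k) (hkodd : Odd k) :
    ∑ m ∈ N.divisors.filter (fun m => 2 * m ^ 2 ∣ N * k), 2 ^ (pm N k m + tm N k m)
      = (N / 2).divisors.card := by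
  have hN0 : N ≠ 0 := hN.ne'
  have hk0 : k ≠ 0 := hk.ne'
  set a := N.factorization 2 with hadef
  have h2N : 2 ∣ N := hNeven.two_dvd
  have ha1 : 1 ≤ a := Nat.Prime.factorization_pos_of_dvd Nat.prime_two hN0 h2N
  set n := ordCompl[2] N with hndef
  have hn0 : n ≠ 0 := (Nat.ordCompl_pos 2 hN0).ne'
  have h2n : ¬ 2 ∣ n := Nat.not_dvd_ordCompl Nat.prime_two hN0
  have hnodd : Odd n := Nat.odd_iff.2 (by
    rcases Nat.mod_two_eq_zero_or_one n with h | h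
    · exact absurd (Nat.dvd_iff_mod_eq_zero.2 h) h2n
    · exact h)
  have hNeq : N = 2 ^ a * n := (Nat.ordProj_mul_ordCompl_eq_self N 2).symm
  have hN2eq : N / 2 = 2 ^ (a - 1) * n := by
    rw [hNeq]
    have h2a : (2:ℕ) ^ a = 2 * 2 ^ (a - 1) := by
      rw [← pow_succ']
      congr 1
      omega
    rw [h2a, mul_assoc, Nat.mul_div_cancel_left _ (by norm_num)]
  have hcop : Nat.Coprime (2 ^ (a - 1)) n :=
    Nat.Coprime.pow_left _ (Nat.prime_two.coprime_iff_not_dvd.2 h2n)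
  have hcopa : Nat.Coprime (2 ^ a) n :=
    Nat.Coprime.pow_left _ (Nat.prime_two.coprime_iff_not_dvd.2 h2n)
  rw [hN2eq, hcop.card_divisors_mul]
  have hcard2 : ((2:ℕ) ^ (a - 1)).divisors.card = a := by
    rw [Nat.divisors_prime_pow Nat.prime_two]
    simp
    omega
  rw [hcard2, Finset.sum_filter, hNeq,
    sum_div_mul _ (pow_ne_zero a two_ne_zero) hn0 hcopa,
    Nat.sum_divisors_prime_pow Nat.prime_two]
  rw [Finset.sum_congr rfl (fun e he => Finset.sum_congr rfl (fun m₁ hm₁ =>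
    F_split hnodd hn0 hkodd hk0 ha1 (by simp at he; omega) (Nat.dvd_of_mem_divisors hm₁)))]
  rw [← Finset.sum_mul_sum, sum_w_two, odd_sum n hnodd hn0 k hk0]
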